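/- With S, T, τ defined as below, the following identities hold: ST = C (the edge adjacency matrix), ST − τ = B (the non-backtracking matrix), TτS = D (the degree matrix), and TS = A (the adjacency matrix). Consequently B[S T^T] = [S T^T]K, where K = [[A, D−I],[−I, 0]]. -/

import Mathlib

open Matrix

variable {V : Type*} [Fintype V] [DecidableEq V]

/-- The non-backtracking matrix `B (u,v) (x,y) = 1` iff `v = x` and `u ≠ y`. -/
def nbMatrix (G : SimpleGraph V) [DecidableRel G.Adj] : Matrix G.Dart G.Dart ℂ :=
  Matrix.of fun d e => if d.toProd.2 = e.toProd.1 ∧ d.toProd.1 ≠ e.toProd.2 then 1 else 0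

/-- The edge adjacency matrix `C (u,v) (x,y) = 1` iff `v = x`. -/
def edgeAdj (G : SimpleGraph V) [DecidableRel G.Adj] : Matrix G.Dart G.Dart ℂ :=
  Matrix.of fun d e => if d.toProd.2 = e.toProd.1 then 1 else 0

/-- The edge-reversal operator `τ (u,v) (x,y) = 1` iff `v = x` and `u = y`. -/
def tauMatrix (G : SimpleGraph V) [DecidableRel G.Adj] : Matrix G.Dart G.Dart ℂ :=
  Matrix.of fun d e => if d.toProd.2 = e.toProd.1 ∧ d.toProd.1 = e.toProd.2 then 1 else 0

/-- `S (u,v) x = 1` iff `v = x`. -/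
def Smatrix (G : SimpleGraph V) [DecidableRel G.Adj] : Matrix G.Dart V ℂ :=
  Matrix.of fun d x => if d.toProd.2 = x then 1 else 0

/-- `T x (u,v) = 1` iff `x = u`. -/
def Tmatrix (G : SimpleGraph V) [DecidableRel G.Adj] : Matrix V G.Dart ℂ :=
  Matrix.of fun x d => if x = d.toProd.1 then 1 else 0

/-- The matrix `K = [[A, D-I], [-I, 0]]`. -/
def Kmatrix (G : SimpleGraph V) [DecidableRel G.Adj] : Matrix (V ⊕ V) (V ⊕ V) ℂ :=
  Matrix.fromBlocks (G.adjMatrix ℂ) (Matrix.diagonal (fun v => (G.degree v : ℂ)) - 1) (-1) 0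

lemma sum_dart_pair (G : SimpleGraph V) [DecidableRel G.Adj] (a b : V) (f : G.Dart → ℂ) :
    (∑ e : G.Dart, if e.toProd.1 = a ∧ e.toProd.2 = b then f e else 0) =
      if h : G.Adj a b then f ⟨(a, b), h⟩ else 0 := by
  by_cases h : G.Adj a b
  · rw [dif_pos h, Finset.sum_eq_single (⟨(a, b), h⟩ : G.Dart)]
    · simp
    · intro d _ hd
      rw [if_neg]
      rintro ⟨h1, h2⟩
      exact hd (SimpleGraph.Dart.ext _ _ (Prod.ext h1 h2))
    · simp
  · rw [dif_neg h]
    apply Finset.sum_eq_zero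
    intro d _
    rw [if_neg]
    rintro ⟨h1, h2⟩
    exact h (h1 ▸ h2 ▸ d.adj)

lemma hST (G : SimpleGraph V) [DecidableRel G.Adj] :
    Smatrix G * Tmatrix G = edgeAdj G := by
  ext d e
  simp [Smatrix, Tmatrix, edgeAdj, mul_apply, eq_comm]

lemma hTS (G : SimpleGraph V) [DecidableRel G.Adj] :
    Tmatrix G * Smatrix G = G.adjMatrix ℂ := by
  ext x y
  simp only [Tmatrix, Smatrix, mul_apply, of_apply, ite_mul, one_mul, zero_mul,
    SimpleGraph.adjMatrix_apply]
  have h : ∀ e : G.Dart, (if x = e.toProd.1 then if e.toProd.2 = y then (1:ℂ) else 0 else 0)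
      = (if e.toProd.1 = x ∧ e.toProd.2 = y then (1:ℂ) else 0) := fun e => by
    by_cases h1 : x = e.toProd.1 <;> by_cases h2 : e.toProd.2 = y <;> simp_all [eq_comm]
  rw [Finset.sum_congr rfl (fun e _ => h e), sum_dart_pair G x y (fun _ => 1)]
  split_ifs <;> simp_all

lemma hB (G : SimpleGraph V) [DecidableRel G.Adj] :
    Smatrix G * Tmatrix G - tauMatrix G = nbMatrix G := by
  rw [hST]
  ext d e
  simp only [edgeAdj, tauMatrix, nbMatrix, Matrix.sub_apply, of_apply]
  by_cases h1 : d.toProd.2 = e.toProd.1 <;>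
    by_cases h2 : d.toProd.1 = e.toProd.2 <;> simp_all

lemma htauS (G : SimpleGraph V) [DecidableRel G.Adj] :
    tauMatrix G * Smatrix G = (Tmatrix G)ᵀ := by
  ext d y
  simp only [tauMatrix, Smatrix, Tmatrix, mul_apply, of_apply, transpose_apply,
    ite_mul, one_mul, zero_mul]
  have h : ∀ e : G.Dart,
      (if d.toProd.2 = e.toProd.1 ∧ d.toProd.1 = e.toProd.2 then
        if e.toProd.2 = y then (1:ℂ) else 0 else 0)
      = (if e.toProd.1 = d.toProd.2 ∧ e.toProd.2 = d.toProd.1 then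
        (fun e : G.Dart => if e.toProd.2 = y then (1:ℂ) else 0) e else 0) := fun e => by
    by_cases h1 : d.toProd.2 = e.toProd.1 <;>
      by_cases h2 : d.toProd.1 = e.toProd.2 <;> simp_all [eq_comm]
  rw [Finset.sum_congr rfl (fun e _ => h e), sum_dart_pair, dif_pos d.adj.symm]
  simp [eq_comm]

lemma htauTt (G : SimpleGraph V) [DecidableRel G.Adj] :
    tauMatrix G * (Tmatrix G)ᵀ = Smatrix G := by
  ext d x
  simp only [tauMatrix, Smatrix, Tmatrix, mul_apply, of_apply, transpose_apply,
    ite_mul, one_mul, zero_mul]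
  have h : ∀ e : G.Dart,
      (if d.toProd.2 = e.toProd.1 ∧ d.toProd.1 = e.toProd.2 then
        if x = e.toProd.1 then (1:ℂ) else 0 else 0)
      = (if e.toProd.1 = d.toProd.2 ∧ e.toProd.2 = d.toProd.1 then
        (fun e : G.Dart => if x = e.toProd.1 then (1:ℂ) else 0) e else 0) := fun e => by
    by_cases h1 : d.toProd.2 = e.toProd.1 <;>
      by_cases h2 : d.toProd.1 = e.toProd.2 <;> simp_all [eq_comm]
  rw [Finset.sum_congr rfl (fun e _ => h e), sum_dart_pair, dif_pos d.adj.symm]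
  simp [eq_comm]

lemma hTTt (G : SimpleGraph V) [DecidableRel G.Adj] :
    Tmatrix G * (Tmatrix G)ᵀ = Matrix.diagonal (fun v => (G.degree v : ℂ)) := by
  ext x y
  simp only [Tmatrix, mul_apply, of_apply, transpose_apply, diagonal_apply,
    ite_mul, one_mul, zero_mul, mul_ite, mul_one, mul_zero]
  by_cases h : x = y
  · subst h
    rw [if_pos rfl]
    trans ((Finset.univ.filter (fun d : G.Dart => d.fst = x)).card : ℂ)
    · rw [Finset.card_filter]
      push_cast
      apply Finset.sum_congr rfl
      intro d _
      by_cases hd : x = d.toProd.1 <;> simp_all [eq_comm]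
    · rw [SimpleGraph.dart_fst_fiber_card_eq_degree]
  · rw [if_neg h]
    apply Finset.sum_eq_zero
    intro d _
    by_cases h1 : x = d.toProd.1 <;> by_cases h2 : y = d.toProd.1 <;> simp_all

lemma hTtauS (G : SimpleGraph V) [DecidableRel G.Adj] :
    Tmatrix G * tauMatrix G * Smatrix G = Matrix.diagonal (fun v => (G.degree v : ℂ)) := by
  rw [Matrix.mul_assoc, htauS, hTTt]

/-- The identities `ST = C`, `ST - τ = B`, `TτS = D`, `TS = A`, and consequently
`B [S Tᵀ] = [S Tᵀ] K`. -/
theorem st_tau_identities (G : SimpleGraph V) [DecidableRel G.Adj] :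
    Smatrix G * Tmatrix G = edgeAdj G ∧
    Smatrix G * Tmatrix G - tauMatrix G = nbMatrix G ∧
    Tmatrix G * tauMatrix G * Smatrix G = Matrix.diagonal (fun v => (G.degree v : ℂ)) ∧
    Tmatrix G * Smatrix G = G.adjMatrix ℂ ∧
    nbMatrix G * Matrix.fromCols (Smatrix G) (Tmatrix G)ᵀ
      = Matrix.fromCols (Smatrix G) (Tmatrix G)ᵀ * Kmatrix G := by
  refine ⟨hST G, hB G, hTtauS G, hTS G, ?_⟩
  have hBS : nbMatrix G * Smatrix G = Smatrix G * G.adjMatrix ℂ + (Tmatrix G)ᵀ * (-1 : Matrix V V ℂ) := by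
    rw [← hB, Matrix.sub_mul, Matrix.mul_assoc, hTS, htauS, Matrix.mul_neg, Matrix.mul_one,
      sub_eq_add_neg]
  have hBT : nbMatrix G * (Tmatrix G)ᵀ
      = Smatrix G * (Matrix.diagonal (fun v => (G.degree v : ℂ)) - 1) + (Tmatrix G)ᵀ * (0 : Matrix V V ℂ) := by
    rw [← hB, Matrix.sub_mul, Matrix.mul_assoc, hTTt, htauTt, Matrix.mul_zero, add_zero,
      Matrix.mul_sub, Matrix.mul_one]
  unfold Kmatrix
  rw [fromCols_mul_fromBlocks, mul_fromCols, hBS, hBT]
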